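/- Let a, b ∈ ℝ and let x̂_1, x̂_2, ŷ_1, ŷ_2 be positive real numbers satisfying ŷ_1 − 2/ŷ_1 = b − 1/x̂_2 + 1/(x̂_2 + ŷ_2), ŷ_2 − 2/ŷ_2 = b − 1/x̂_1 + 1/(x̂_1 + ŷ_1), x̂_1 − 2/x̂_1 = a − 1/ŷ_2 + 1/(x̂_2 + ŷ_2), and x̂_2 − 2/x̂_2 = a − 1/ŷ_1 + 1/(x̂_1 + ŷ_1). Then x̂_1 = x̂_2 and ŷ_1 = ŷ_2. -/
import Mathlib


/-- If positive reals `x̂₁, x̂₂, ŷ₁, ŷ₂` satisfy the coupled system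
of four equations from Step 4 of the proof of Proposition 4.2, then
`x̂₁ = x̂₂` and `ŷ₁ = ŷ₂`. -/
theorem coupled_system_symmetric_solution
    (a b : ℝ) (x₁ x₂ y₁ y₂ : ℝ)
    (hx₁ : 0 < x₁) (hx₂ : 0 < x₂) (hy₁ : 0 < y₁) (hy₂ : 0 < y₂)
    (h1 : y₁ - 2 / y₁ = b - 1 / x₂ + 1 / (x₂ + y₂))
    (h2 : y₂ - 2 / y₂ = b - 1 / x₁ + 1 / (x₁ + y₁))
    (h3 : x₁ - 2 / x₁ = a - 1 / y₂ + 1 / (x₂ + y₂))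
    (h4 : x₂ - 2 / x₂ = a - 1 / y₁ + 1 / (x₁ + y₁)) :
    x₁ = x₂ ∧ y₁ = y₂ := by
  have hs₁ : 0 < x₁ + y₁ := by linarith
  have hs₂ : 0 < x₂ + y₂ := by linarith
  have hd : y₁ - y₂ - x₁ + x₂ - 1/y₁ + 1/y₂ + 1/x₁ - 1/x₂ = 0 := by
    linear_combination h1 - h2 - h3 + h4
  have he : y₁ - y₂ + x₁ - x₂ - 3/y₁ + 3/y₂ - 3/x₁ + 3/x₂
      = 2/(x₂+y₂) - 2/(x₁+y₁) := by
    linear_combination h1 - h2 + h3 - h4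
  field_simp [hx₁.ne', hx₂.ne', hy₁.ne', hy₂.ne'] at hd
  field_simp [hx₁.ne', hx₂.ne', hy₁.ne', hy₂.ne', hs₁.ne', hs₂.ne'] at he
  have E1 : (y₁-y₂)*((y₁*y₂+1)*(x₁*x₂)) = (x₁-x₂)*((x₁*x₂+1)*(y₁*y₂)) := by
    linear_combination hd
  have E2 : (x₁-x₂)*((y₁*y₂)*((x₁*x₂+3)*((x₁+y₁)*(x₂+y₂)) - 2*(x₁*x₂)))
      + (y₁-y₂)*((x₁*x₂)*((y₁*y₂+3)*((x₁+y₁)*(x₂+y₂)) - 2*(y₁*y₂))) = 0 := by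
    linear_combination he
  clear hd he h1 h2 h3 h4
  have hX : 0 < x₁*x₂ := mul_pos hx₁ hx₂
  have hY : 0 < y₁*y₂ := mul_pos hy₁ hy₂
  have hP : 0 < (x₁+y₁)*(x₂+y₂) := mul_pos hs₁ hs₂
  have hPX : x₁*x₂ < (x₁+y₁)*(x₂+y₂) := by nlinarith [mul_pos hx₁ hy₂, mul_pos hy₁ hx₂]
  have hPY : y₁*y₂ < (x₁+y₁)*(x₂+y₂) := by nlinarith [mul_pos hx₁ hy₂, mul_pos hy₁ hx₂]
  have key1 : 0 < (x₁*x₂+3)*((x₁+y₁)*(x₂+y₂)) - 2*(x₁*x₂) := by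
    nlinarith [mul_pos hX hP]
  have key2 : 0 < (y₁*y₂+3)*((x₁+y₁)*(x₂+y₂)) - 2*(y₁*y₂) := by
    nlinarith [mul_pos hY hP]
  have hc1 : 0 < (y₁*y₂)*((x₁*x₂+3)*((x₁+y₁)*(x₂+y₂)) - 2*(x₁*x₂)) := mul_pos hY key1
  have hc2 : 0 < (x₁*x₂)*((y₁*y₂+3)*((x₁+y₁)*(x₂+y₂)) - 2*(y₁*y₂)) := mul_pos hX key2
  have hCy : 0 < (y₁*y₂+1)*(x₁*x₂) := by positivity
  have hCx : 0 < (x₁*x₂+1)*(y₁*y₂) := by positivity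
  have hu : x₁ = x₂ := by
    rcases lt_trichotomy x₁ x₂ with h | h | h
    · exfalso
      have r1 : (x₁-x₂)*((x₁*x₂+1)*(y₁*y₂)) < 0 :=
        mul_neg_of_neg_of_pos (by linarith) hCx
      have hv : y₁ - y₂ < 0 := by
        by_contra hcon
        push_neg at hcon
        have := mul_nonneg hcon hCy.le
        linarith
      have t1 := mul_neg_of_neg_of_pos (by linarith : x₁ - x₂ < 0) hc1
      have t2 := mul_neg_of_neg_of_pos hv hc2
      linarith
    · exact h
    · exfalso
      have r1 : 0 < (x₁-x₂)*((x₁*x₂+1)*(y₁*y₂)) :=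
        mul_pos (by linarith) hCx
      have hv : 0 < y₁ - y₂ := by
        by_contra hcon
        push_neg at hcon
        have := mul_nonpos_of_nonpos_of_nonneg hcon hCy.le
        linarith
      have t1 := mul_pos (by linarith : 0 < x₁ - x₂) hc1
      have t2 := mul_pos hv hc2
      linarith
  refine ⟨hu, ?_⟩
  have hz : (y₁-y₂)*((y₁*y₂+1)*(x₁*x₂)) = 0 := by
    rw [hu] at E1 ⊢
    linarith [E1]
  rcases mul_eq_zero.1 hz with h | h
  · linarith
  · linarith
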